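/- Let α, β, ω, A be real numbers and let u : ℝ → ℝ be a twice differentiable solution of the cantilever beam equation u'' + ω²u + αu²u'' + αu(u')² + βω²u³ = 0 with initial conditions u(0) = A and u'(0) = 0. Then for every t ∈ ℝ, (1 + α u(t)²)·u'(t)² + ω²·u(t)²·(1 + (β/2)·u(t)²) = ω²·A²·(1 + (β/2)·A²). -/

import Mathlib

/-- Energy conservation (first integral) for the cantilever beam
equation `u'' + ω²u + αu²u'' + αu(u')² + βω²u³ = 0` with `u(0) = A`,
`u'(0) = 0`: for every `t`,
`(1 + α u(t)²) u'(t)² + ω² u(t)² (1 + (β/2) u(t)²) = ω² A² (1 + (β/2) A²)`. -/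
theorem cantilever_first_integral (α β ω A : ℝ) (u : ℝ → ℝ)
    (hu : ∀ t, DifferentiableAt ℝ u t)
    (hu' : ∀ t, DifferentiableAt ℝ (deriv u) t)
    (hode : ∀ t, deriv (deriv u) t + ω ^ 2 * u t
      + α * (u t) ^ 2 * deriv (deriv u) t + α * u t * (deriv u t) ^ 2
      + β * ω ^ 2 * (u t) ^ 3 = 0)
    (h0 : u 0 = A) (h0' : deriv u 0 = 0) :
    ∀ t, (1 + α * (u t) ^ 2) * (deriv u t) ^ 2
      + ω ^ 2 * (u t) ^ 2 * (1 + β / 2 * (u t) ^ 2)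
      = ω ^ 2 * A ^ 2 * (1 + β / 2 * A ^ 2) := by
  set E : ℝ → ℝ := fun t => (1 + α * (u t) ^ 2) * (deriv u t) ^ 2
      + ω ^ 2 * (u t) ^ 2 * (1 + β / 2 * (u t) ^ 2) with hE
  have hEderiv : ∀ t, HasDerivAt E 0 t := by
    intro t
    have h1 : HasDerivAt u (deriv u t) t := (hu t).hasDerivAt
    have h2 : HasDerivAt (deriv u) (deriv (deriv u) t) t := (hu' t).hasDerivAt
    have key : HasDerivAt E
        ((α * (2 * u t * deriv u t)) * (deriv u t) ^ 2
          + (1 + α * (u t) ^ 2) * (2 * deriv u t ^ 1 * deriv (deriv u) t)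
          + ω ^ 2 * (2 * u t ^ 1 * deriv u t) * (1 + β / 2 * (u t) ^ 2)
          + ω ^ 2 * (u t) ^ 2 * (β / 2 * (2 * u t ^ 1 * deriv u t))) t := by
      have ha : HasDerivAt (fun t => (1 + α * (u t) ^ 2) * (deriv u t) ^ 2)
          ((α * (2 * u t * deriv u t)) * (deriv u t) ^ 2
            + (1 + α * (u t) ^ 2) * (2 * deriv u t ^ 1 * deriv (deriv u) t)) t := by
        have := ((h1.pow 2).const_mul α).const_add 1 |>.mul (h2.pow 2)
        simpa [Pi.mul_def, pow_one, mul_comm, mul_left_comm, mul_assoc] using this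
      have hb : HasDerivAt (fun t => ω ^ 2 * (u t) ^ 2 * (1 + β / 2 * (u t) ^ 2))
          (ω ^ 2 * (2 * u t ^ 1 * deriv u t) * (1 + β / 2 * (u t) ^ 2)
            + ω ^ 2 * (u t) ^ 2 * (β / 2 * (2 * u t ^ 1 * deriv u t))) t := by
        exact ((h1.pow 2).const_mul (ω ^ 2)).mul (((h1.pow 2).const_mul (β / 2)).const_add 1)
      have := ha.add hb
      simpa [add_assoc, Pi.add_def] using this
    have hzero : (α * (2 * u t * deriv u t)) * (deriv u t) ^ 2
          + (1 + α * (u t) ^ 2) * (2 * deriv u t ^ 1 * deriv (deriv u) t)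
          + ω ^ 2 * (2 * u t ^ 1 * deriv u t) * (1 + β / 2 * (u t) ^ 2)
          + ω ^ 2 * (u t) ^ 2 * (β / 2 * (2 * u t ^ 1 * deriv u t)) = 0 := by
      linear_combination 2 * deriv u t * hode t
    rw [← hzero]; exact key
  have hconst : ∀ t, E t = E 0 :=
    fun t => is_const_of_deriv_eq_zero (fun x => (hEderiv x).differentiableAt)
      (fun x => (hEderiv x).deriv) t 0
  intro t
  have := hconst t
  simp only [hE] at this
  rw [this, h0, h0']
  ring
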